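/- Fix natural numbers M, Q_x, Q_y, L_x, L_y ≥ 1, set N_x = Q_x L_x, N_y = Q_y L_y, N = N_x N_y, Q = Q_x Q_y, and fix real angles θ_{d₁}, θ_{a₁}, φ_{a₁}, θ_{d₂}, φ_{d₂} and spacings d₁, d₂, λ > 0. Index the RIS elements by pairs (n_x, n_y) with 0 ≤ n_x < N_x, 0 ≤ n_y < N_y, and define the row vector h̄₂ ∈ ℂ^{1×N} with entry exp(i·2π(d₂/λ)(sin θ_{d₂}·n_x + cos θ_{d₂} sin φ_{d₂}·n_y)) at (n_x,n_y), and the matrix H̄₁ ∈ ℂ^{N×M} with entry exp(−i·2π(d₂/λ)(sin θ_{a₁}·n_x + cos θ_{a₁} sin φ_{a₁}·n_y))·exp(i·2π(d₁/λ) sin θ_{d₁}·m) at ((n_x,n_y), m) for 0 ≤ m < M. For φ : {1,…,Q} → ℝ let Φ(φ) be the diagonal N×N matrix whose entry at element (n_x,n_y) is e^{iφ_q}, where q is the index of the subarray containing (n_x,n_y) (the subarray with ⌊n_x/L_x⌋ = q_x and ⌊n_y/L_y⌋ = q_y). Set p₁ = π(d₂/λ)(sin θ_{d₂} − sin θ_{a₁})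 and p₂ = π(d₂/λ)(sin φ_{d₂} cos θ_{d₂} − sin φ_{a₁} cos θ_{a₁}), and assume sin p₁ ≠ 0 and sin p₂ ≠ 0. Define η = (sin(L_x p₁)·sin(L_y p₂)/(L_x sin p₁ · L_y sin p₂))². Then the supremum over all φ : {1,…,Q} → ℝ of ‖h̄₂ Φ(φ) H̄₁‖² equals η·N²·M, and it is attained at φ_{q,opt} = −(2p₁(x_q−1) + 2p₂(y_q−1) + (L_x−1)p₁ + (L_y−1)p₂), where (x_q, y_q) are the (1-based) coordinates of the first element of subarray q. -/

import Mathlib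

open Matrix Complex

lemma two_I_sin (θ : ℝ) : (2:ℂ) * I * (Real.sin θ : ℂ) = Complex.exp (I*θ) - Complex.exp (-(I*θ)) := by
  rw [Complex.ofReal_sin, Complex.sin]
  field_simp
  ring_nf
  rw [Complex.I_sq]
  ring

lemma exp_two_sub_one (θ : ℝ) :
    Complex.exp (I * (2*θ)) - 1 = Complex.exp (I * θ) * (2 * I * (Real.sin θ : ℂ)) := by
  rw [two_I_sin]
  rw [mul_sub, ← Complex.exp_add, ← Complex.exp_add]
  norm_num
  rw [show I*θ + I*θ = I*(2*θ) by ring]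

lemma geom_exp (L : ℕ) (p : ℝ) (hs : Real.sin p ≠ 0) :
    ∑ l : Fin L, Complex.exp (I * (2*p*(l:ℕ) : ℝ))
      = Complex.exp (I * (((L:ℝ)-1)*p)) * ((Real.sin ((L:ℝ)*p) : ℝ) / (Real.sin p : ℝ) : ℂ) := by
  have hd : Complex.exp (I*(2*p)) - 1 = Complex.exp (I * p) * (2 * I * (Real.sin p : ℂ)) :=
    exp_two_sub_one p
  have hsne : (Real.sin p : ℂ) ≠ 0 := Complex.ofReal_ne_zero.mpr hs
  have hne : Complex.exp (I*(2*p)) - 1 ≠ 0 := by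
    rw [hd]
    exact mul_ne_zero (Complex.exp_ne_zero _)
      (mul_ne_zero (mul_ne_zero two_ne_zero Complex.I_ne_zero) hsne)
  have hne1 : Complex.exp (I*(2*p)) ≠ 1 := by
    intro h; exact hne (by rw [h]; ring)
  have hterm : ∀ l : ℕ, Complex.exp (I * (2*p*(l:ℕ) : ℝ)) = Complex.exp (I*(2*p)) ^ l := by
    intro l
    rw [← Complex.exp_nat_mul]
    congr 1
    push_cast; ring
  have hexp : Complex.exp (I * ((((L:ℝ)-1))*p : ℂ)) * Complex.exp (I*(p:ℂ))
      = Complex.exp (I*(((L:ℝ)*p : ℝ):ℂ)) := by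
    rw [← Complex.exp_add]; congr 1; push_cast; ring
  calc ∑ l : Fin L, Complex.exp (I * (2*p*(l:ℕ) : ℝ))
      = ∑ l ∈ Finset.range L, Complex.exp (I*(2*p)) ^ l := by
        rw [← Fin.sum_univ_eq_sum_range (fun l => Complex.exp (I*(2*p)) ^ l) L]
        exact Finset.sum_congr rfl fun l _ => hterm l.val
    _ = (Complex.exp (I*(2*p)) ^ L - 1) / (Complex.exp (I*(2*p)) - 1) := geom_sum_eq hne1 L
    _ = Complex.exp (I * (((L:ℝ)-1)*p)) * ((Real.sin ((L:ℝ)*p) : ℝ) / (Real.sin p : ℂ)) := by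
        rw [div_eq_iff hne, hd]
        rw [← Complex.exp_nat_mul]
        have hnum : Complex.exp ((L:ℂ) * (I*(2*p))) - 1
            = Complex.exp (I * (((L:ℝ)*p : ℝ):ℂ)) * (2 * I * (Real.sin ((L:ℝ)*p) : ℂ)) := by
          rw [show ((L:ℂ) * (I*(2*p))) = I * (2*(((L:ℝ)*p : ℝ):ℂ)) by push_cast; ring]
          exact exp_two_sub_one ((L:ℝ)*p)
        rw [hnum]
        have hdiv : ((Real.sin ((L:ℝ)*p) : ℂ) / (Real.sin p : ℂ)) * (Real.sin p : ℂ)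
            = (Real.sin ((L:ℝ)*p) : ℂ) := div_mul_cancel₀ _ hsne
        linear_combination (-(2*I*((Real.sin ((L:ℝ)*p) : ℂ)/(Real.sin p:ℂ))*((Real.sin p:ℂ)))) * hexp
          + (-(2*I*Complex.exp (I*(((L:ℝ)*p : ℝ):ℂ)))) * hdiv

lemma geom_exp' (L : ℕ) (p : ℝ) (hs : Real.sin p ≠ 0) :
    ∑ l : Fin L, Complex.exp (I * ((2*p*(l.val:ℝ) : ℝ):ℂ))
      = Complex.exp (I * ((((L:ℝ)-1)*p : ℝ):ℂ)) * ((Real.sin ((L:ℝ)*p) / Real.sin p : ℝ):ℂ) := by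
  rw [geom_exp L p hs]
  congr 1
  · congr 1; push_cast; ring
  · push_cast; ring

lemma split_sum (Q L : ℕ) (p : ℝ) (w : ℕ → ℝ) :
    ∑ n : Fin (Q*L), Complex.exp (I * ((2*p*(n.val:ℝ) + w (n.val / L) : ℝ):ℂ))
      = ∑ q : Fin Q, Complex.exp (I * ((2*p*((q.val:ℝ)*(L:ℝ)) + w q.val : ℝ):ℂ))
          * ∑ l : Fin L, Complex.exp (I * ((2*p*(l.val:ℝ) : ℝ):ℂ)) := by
  rcases Nat.eq_zero_or_pos L with hL | hL
  · subst hL; simp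
  rw [← Equiv.sum_comp (finProdFinEquiv (m := Q) (n := L))
      (fun n => Complex.exp (I * ((2*p*(n.val:ℝ) + w (n.val / L) : ℝ):ℂ)))]
  rw [Fintype.sum_prod_type]
  refine Finset.sum_congr rfl fun q _ => ?_
  rw [Finset.mul_sum]
  refine Finset.sum_congr rfl fun l _ => ?_
  have hval : ((finProdFinEquiv (q, l)) : Fin (Q*L)).val = l.val + L * q.val := by
    simp [finProdFinEquiv]
  rw [hval]
  have hdiv : (l.val + L * q.val) / L = q.val := by
    rw [Nat.add_mul_div_left _ _ hL, Nat.div_eq_of_lt l.isLt]; simp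
  rw [hdiv, ← Complex.exp_add]
  congr 1
  push_cast
  ring

lemma norm_exp_I_mul (r : ℝ) : ‖Complex.exp (I * (r:ℂ))‖ = 1 := by
  rw [mul_comm]; exact Complex.norm_exp_ofReal_mul_I r


/-- Theorem 1: with the LoS channels of the subarray-based RIS, the supremum over all
subarray phase configurations `φ` of `‖h̄₂ Φ(φ) H̄₁‖²` equals `η·N²·M`, attained at the
optimal phase design `φ_{q,opt}`. -/
theorem theorem1_max_sq_norm_subarray
    (M Qx Qy Lx Ly : ℕ) (hM : 1 ≤ M)
    (hQx : 1 ≤ Qx) (hQy : 1 ≤ Qy) (hLx : 1 ≤ Lx) (hLy : 1 ≤ Ly)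
    (θd₁ θa₁ φa₁ θd₂ φd₂ d₁ d₂ lam : ℝ)
    (hd₁ : 0 < d₁) (hd₂ : 0 < d₂) (hlam : 0 < lam)
    (p₁ p₂ : ℝ)
    (hp₁ : p₁ = Real.pi * (d₂ / lam) * (Real.sin θd₂ - Real.sin θa₁))
    (hp₂ : p₂ = Real.pi * (d₂ / lam)
        * (Real.sin φd₂ * Real.cos θd₂ - Real.sin φa₁ * Real.cos θa₁))
    (hs₁ : Real.sin p₁ ≠ 0) (hs₂ : Real.sin p₂ ≠ 0)
    (η : ℝ)
    (hη : η = (Real.sin (Lx * p₁) * Real.sin (Ly * p₂)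
        / ((Lx : ℝ) * Real.sin p₁ * ((Ly : ℝ) * Real.sin p₂))) ^ 2)
    (hbar₂ : Fin (Qx * Lx) × Fin (Qy * Ly) → ℂ)
    (hhbar₂ : hbar₂ = fun n =>
      Complex.exp (Complex.I * ((2 * Real.pi * (d₂ / lam)
        * (Real.sin θd₂ * (n.1.val : ℝ)
          + Real.cos θd₂ * Real.sin φd₂ * (n.2.val : ℝ)) : ℝ) : ℂ)))
    (Hbar₁ : Matrix (Fin (Qx * Lx) × Fin (Qy * Ly)) (Fin M) ℂ)
    (hHbar₁ : Hbar₁ = Matrix.of fun n m =>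
      Complex.exp (-(Complex.I * ((2 * Real.pi * (d₂ / lam)
        * (Real.sin θa₁ * (n.1.val : ℝ)
          + Real.cos θa₁ * Real.sin φa₁ * (n.2.val : ℝ)) : ℝ) : ℂ)))
      * Complex.exp (Complex.I
          * ((2 * Real.pi * (d₁ / lam) * Real.sin θd₁ * (m.val : ℝ) : ℝ) : ℂ)))
    (Φ : (ℕ × ℕ → ℝ) → Matrix (Fin (Qx * Lx) × Fin (Qy * Ly))
        (Fin (Qx * Lx) × Fin (Qy * Ly)) ℂ)
    (hΦ : ∀ φ, Φ φ = Matrix.diagonal fun n =>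
      Complex.exp (Complex.I * ((φ (n.1.val / Lx, n.2.val / Ly) : ℝ) : ℂ)))
    (φopt : ℕ × ℕ → ℝ)
    (hφopt : ∀ q : ℕ × ℕ, φopt q =
      -(2 * p₁ * (((q.1 * Lx + 1 : ℕ) : ℝ) - 1) + 2 * p₂ * (((q.2 * Ly + 1 : ℕ) : ℝ) - 1)
        + ((Lx : ℝ) - 1) * p₁ + ((Ly : ℝ) - 1) * p₂)) :
    (∀ φ : ℕ × ℕ → ℝ,
        ∑ m, ‖Matrix.vecMul hbar₂ (Φ φ * Hbar₁) m‖ ^ 2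
          ≤ η * ((Qx * Lx * (Qy * Ly) : ℕ) : ℝ) ^ 2 * M) ∧
    ∑ m, ‖Matrix.vecMul hbar₂ (Φ φopt * Hbar₁) m‖ ^ 2
      = η * ((Qx * Lx * (Qy * Ly) : ℕ) : ℝ) ^ 2 * M := by
  subst hhbar₂ hHbar₁
  -- abbreviations
  set A : ℝ := Real.sin ((Lx:ℝ) * p₁) / Real.sin p₁ with hA
  set B : ℝ := Real.sin ((Ly:ℝ) * p₂) / Real.sin p₂ with hB
  set G1 : ℂ := ∑ l : Fin Lx, Complex.exp (I * ((2*p₁*(l.val:ℝ) : ℝ):ℂ)) with hG1def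
  set G2 : ℂ := ∑ l : Fin Ly, Complex.exp (I * ((2*p₂*(l.val:ℝ) : ℝ):ℂ)) with hG2def
  have hG1 : G1 = Complex.exp (I * ((((Lx:ℝ)-1)*p₁ : ℝ):ℂ)) * (A:ℂ) := geom_exp' Lx p₁ hs₁
  have hG2 : G2 = Complex.exp (I * ((((Ly:ℝ)-1)*p₂ : ℝ):ℂ)) * (B:ℂ) := geom_exp' Ly p₂ hs₂
  have hnormG1 : ‖G1‖ = |A| := by
    rw [hG1, norm_mul, norm_exp_I_mul, one_mul, Complex.norm_real, Real.norm_eq_abs]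
  have hnormG2 : ‖G2‖ = |B| := by
    rw [hG2, norm_mul, norm_exp_I_mul, one_mul, Complex.norm_real, Real.norm_eq_abs]
  -- the inner sum S
  set S : (ℕ × ℕ → ℝ) → ℂ := fun φ =>
    ∑ n : Fin (Qx*Lx) × Fin (Qy*Ly),
      Complex.exp (I * ((2*p₂*(n.2.val:ℝ)
        + (2*p₁*(n.1.val:ℝ) + φ (n.1.val / Lx, n.2.val / Ly)) : ℝ):ℂ)) with hSdef
  -- entry formula
  have hentry : ∀ (φ : ℕ × ℕ → ℝ) (m : Fin M),
      Matrix.vecMul (fun n =>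
        Complex.exp (Complex.I * ((2 * Real.pi * (d₂ / lam)
          * (Real.sin θd₂ * (n.1.val : ℝ)
            + Real.cos θd₂ * Real.sin φd₂ * (n.2.val : ℝ)) : ℝ) : ℂ))) (Φ φ
        * (Matrix.of fun n m =>
          Complex.exp (-(Complex.I * ((2 * Real.pi * (d₂ / lam)
            * (Real.sin θa₁ * (n.1.val : ℝ)
              + Real.cos θa₁ * Real.sin φa₁ * (n.2.val : ℝ)) : ℝ) : ℂ)))
          * Complex.exp (Complex.I
              * ((2 * Real.pi * (d₁ / lam) * Real.sin θd₁ * (m.val : ℝ) : ℝ) : ℂ)) : Matrix (Fin (Qx * Lx) × Fin (Qy * Ly)) (Fin M) ℂ)) m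
      = S φ * Complex.exp (I * ((2 * Real.pi * (d₁ / lam) * Real.sin θd₁ * (m.val : ℝ) : ℝ) : ℂ)) := by
    intro φ m
    rw [hΦ φ, hSdef]
    simp only [Matrix.vecMul, dotProduct, Matrix.diagonal_mul, Matrix.of_apply]
    rw [Finset.sum_mul]
    refine Finset.sum_congr rfl fun n _ => ?_
    simp only [← Complex.exp_add]
    congr 1
    push_cast
    rw [hp₁, hp₂]
    push_cast
    ring
  -- sum over m
  have hsumM : ∀ (φ : ℕ × ℕ → ℝ),
      (∑ m : Fin M, ‖Matrix.vecMul (fun n =>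
        Complex.exp (Complex.I * ((2 * Real.pi * (d₂ / lam)
          * (Real.sin θd₂ * (n.1.val : ℝ)
            + Real.cos θd₂ * Real.sin φd₂ * (n.2.val : ℝ)) : ℝ) : ℂ))) (Φ φ
        * (Matrix.of fun n m =>
          Complex.exp (-(Complex.I * ((2 * Real.pi * (d₂ / lam)
            * (Real.sin θa₁ * (n.1.val : ℝ)
              + Real.cos θa₁ * Real.sin φa₁ * (n.2.val : ℝ)) : ℝ) : ℂ)))
          * Complex.exp (Complex.I
              * ((2 * Real.pi * (d₁ / lam) * Real.sin θd₁ * (m.val : ℝ) : ℝ) : ℂ)) : Matrix (Fin (Qx * Lx) × Fin (Qy * Ly)) (Fin M) ℂ)) m‖ ^ 2)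
      = (M:ℝ) * ‖S φ‖^2 := by
    intro φ
    calc (∑ m : Fin M, ‖Matrix.vecMul _ _ m‖ ^ 2)
        = ∑ m : Fin M, ‖S φ‖^2 := by
          refine Finset.sum_congr rfl fun m _ => ?_
          rw [hentry φ m, norm_mul, norm_exp_I_mul, mul_one]
      _ = (M:ℝ) * ‖S φ‖^2 := by
          rw [Finset.sum_const, Finset.card_univ, Fintype.card_fin, nsmul_eq_mul]
  -- factorization of S
  have hfact : ∀ (φ : ℕ × ℕ → ℝ), S φ = ∑ qy : Fin Qy,
      ((∑ qx : Fin Qx, Complex.exp (I * ((2*p₁*((qx.val:ℝ)*(Lx:ℝ))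
        + (2*p₂*((qy.val:ℝ)*(Ly:ℝ)) + φ (qx.val, qy.val)) : ℝ):ℂ)) * G1) * G2) := by
    intro φ
    rw [hSdef]
    simp only []
    rw [Fintype.sum_prod_type]
    have hinner : ∀ n1 : Fin (Qx*Lx),
        (∑ n2 : Fin (Qy*Ly), Complex.exp (I * ((2*p₂*(n2.val:ℝ)
          + (2*p₁*(n1.val:ℝ) + φ (n1.val / Lx, n2.val / Ly)) : ℝ):ℂ)))
        = ∑ qy : Fin Qy, Complex.exp (I * ((2*p₂*((qy.val:ℝ)*(Ly:ℝ))
          + (2*p₁*(n1.val:ℝ) + φ (n1.val / Lx, qy.val)) : ℝ):ℂ)) * G2 :=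
      fun n1 => split_sum Qy Ly p₂ (fun k => 2*p₁*(n1.val:ℝ) + φ (n1.val / Lx, k))
    rw [Finset.sum_congr rfl fun n1 _ => hinner n1]
    rw [Finset.sum_comm]
    refine Finset.sum_congr rfl fun qy _ => ?_
    rw [← Finset.sum_mul]
    congr 1
    have hre : ∀ n1 : Fin (Qx*Lx),
        Complex.exp (I * ((2*p₂*((qy.val:ℝ)*(Ly:ℝ))
          + (2*p₁*(n1.val:ℝ) + φ (n1.val / Lx, qy.val)) : ℝ):ℂ))
        = Complex.exp (I * ((2*p₁*(n1.val:ℝ)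
          + (2*p₂*((qy.val:ℝ)*(Ly:ℝ)) + φ (n1.val / Lx, qy.val)) : ℝ):ℂ)) := by
      intro n1; congr 1; push_cast; ring
    rw [Finset.sum_congr rfl fun n1 _ => hre n1]
    exact split_sum Qx Lx p₁ (fun k => 2*p₂*((qy.val:ℝ)*(Ly:ℝ)) + φ (k, qy.val))
  -- key algebraic identity for η N²
  have hLx0 : (Lx:ℝ) ≠ 0 := Nat.cast_ne_zero.mpr (by omega)
  have hLy0 : (Ly:ℝ) ≠ 0 := Nat.cast_ne_zero.mpr (by omega)
  have hηN : η * ((Qx * Lx * (Qy * Ly) : ℕ) : ℝ) ^ 2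
      = ((Qx:ℝ) * (Qy:ℝ) * (|A| * |B|))^2 := by
    have habs : (|A| * |B|)^2 = A^2 * B^2 := by
      rw [mul_pow, _root_.sq_abs, _root_.sq_abs]
    rw [mul_pow, habs, hη, hA, hB]
    push_cast
    field_simp
  -- bound for arbitrary φ
  have hSbound : ∀ (φ : ℕ × ℕ → ℝ), ‖S φ‖ ≤ (Qx:ℝ) * (Qy:ℝ) * (|A| * |B|) := by
    intro φ
    rw [hfact φ]
    calc ‖∑ qy : Fin Qy, ((∑ qx : Fin Qx, Complex.exp (I * ((2*p₁*((qx.val:ℝ)*(Lx:ℝ))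
            + (2*p₂*((qy.val:ℝ)*(Ly:ℝ)) + φ (qx.val, qy.val)) : ℝ):ℂ)) * G1) * G2)‖
        ≤ ∑ qy : Fin Qy, ‖(∑ qx : Fin Qx, Complex.exp (I * ((2*p₁*((qx.val:ℝ)*(Lx:ℝ))
            + (2*p₂*((qy.val:ℝ)*(Ly:ℝ)) + φ (qx.val, qy.val)) : ℝ):ℂ)) * G1) * G2‖ :=
          norm_sum_le _ _
      _ ≤ ∑ qy : Fin Qy, ((Qx:ℝ) * |A|) * |B| := by
          refine Finset.sum_le_sum fun qy _ => ?_
          rw [norm_mul, hnormG2]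
          refine mul_le_mul_of_nonneg_right ?_ (abs_nonneg _)
          calc ‖∑ qx : Fin Qx, Complex.exp (I * ((2*p₁*((qx.val:ℝ)*(Lx:ℝ))
                + (2*p₂*((qy.val:ℝ)*(Ly:ℝ)) + φ (qx.val, qy.val)) : ℝ):ℂ)) * G1‖
              ≤ ∑ qx : Fin Qx, ‖Complex.exp (I * ((2*p₁*((qx.val:ℝ)*(Lx:ℝ))
                + (2*p₂*((qy.val:ℝ)*(Ly:ℝ)) + φ (qx.val, qy.val)) : ℝ):ℂ)) * G1‖ :=
                norm_sum_le _ _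
            _ = ∑ qx : Fin Qx, |A| := by
                refine Finset.sum_congr rfl fun qx _ => ?_
                rw [norm_mul, norm_exp_I_mul, one_mul, hnormG1]
            _ = (Qx:ℝ) * |A| := by
                rw [Finset.sum_const, Finset.card_univ, Fintype.card_fin, nsmul_eq_mul]
      _ = (Qx:ℝ) * (Qy:ℝ) * (|A| * |B|) := by
          rw [Finset.sum_const, Finset.card_univ, Fintype.card_fin, nsmul_eq_mul]
          ring
  -- value at φopt
  have hSopt : S φopt = ((((Qx:ℝ) * (Qy:ℝ)) * (A * B) : ℝ) : ℂ) := by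
    rw [hfact φopt]
    have hterm : ∀ (qx : Fin Qx) (qy : Fin Qy),
        Complex.exp (I * ((2*p₁*((qx.val:ℝ)*(Lx:ℝ))
          + (2*p₂*((qy.val:ℝ)*(Ly:ℝ)) + φopt (qx.val, qy.val)) : ℝ):ℂ))
        = Complex.exp (I * ((-(((Lx:ℝ)-1)*p₁ + ((Ly:ℝ)-1)*p₂) : ℝ):ℂ)) := by
      intro qx qy
      rw [hφopt (qx.val, qy.val)]
      congr 1
      push_cast
      ring
    have hcancel : Complex.exp (I * ((-(((Lx:ℝ)-1)*p₁ + ((Ly:ℝ)-1)*p₂) : ℝ):ℂ))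
        * (Complex.exp (I * ((((Lx:ℝ)-1)*p₁ : ℝ):ℂ))
          * Complex.exp (I * ((((Ly:ℝ)-1)*p₂ : ℝ):ℂ))) = 1 := by
      rw [← Complex.exp_add, ← Complex.exp_add, ← Complex.exp_zero]
      congr 1
      push_cast
      ring
    calc (∑ qy : Fin Qy, ((∑ qx : Fin Qx, Complex.exp (I * ((2*p₁*((qx.val:ℝ)*(Lx:ℝ))
            + (2*p₂*((qy.val:ℝ)*(Ly:ℝ)) + φopt (qx.val, qy.val)) : ℝ):ℂ)) * G1) * G2))
        = ∑ qy : Fin Qy, ((∑ qx : Fin Qx,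
            Complex.exp (I * ((-(((Lx:ℝ)-1)*p₁ + ((Ly:ℝ)-1)*p₂) : ℝ):ℂ)) * G1) * G2) := by
          refine Finset.sum_congr rfl fun qy _ => ?_
          congr 1
          rw [Finset.sum_congr rfl fun qx _ => by rw [hterm qx qy]]
      _ = (Qy:ℂ) * (((Qx:ℂ) * (Complex.exp (I * ((-(((Lx:ℝ)-1)*p₁ + ((Ly:ℝ)-1)*p₂) : ℝ):ℂ)) * G1)) * G2) := by
          rw [Finset.sum_const, Finset.sum_const, Finset.card_univ, Finset.card_univ,
            Fintype.card_fin, Fintype.card_fin, nsmul_eq_mul, nsmul_eq_mul]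
      _ = ((((Qx:ℝ) * (Qy:ℝ)) * (A * B) : ℝ) : ℂ) := by
          rw [hG1, hG2]
          rw [show ((((Qx:ℝ) * (Qy:ℝ)) * (A * B) : ℝ) : ℂ)
            = (Qx:ℂ) * (Qy:ℂ) * ((A:ℂ) * (B:ℂ)) by push_cast; ring]
          linear_combination ((Qx:ℂ) * (Qy:ℂ) * (A:ℂ) * (B:ℂ)) * hcancel
  constructor
  · intro φ
    rw [hsumM φ]
    have h1 : ‖S φ‖^2 ≤ ((Qx:ℝ) * (Qy:ℝ) * (|A| * |B|))^2 := by
      refine pow_le_pow_left₀ (norm_nonneg _) (hSbound φ) 2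
    calc (M:ℝ) * ‖S φ‖^2 ≤ (M:ℝ) * ((Qx:ℝ) * (Qy:ℝ) * (|A| * |B|))^2 := by
          exact mul_le_mul_of_nonneg_left h1 (Nat.cast_nonneg M)
      _ = η * ((Qx * Lx * (Qy * Ly) : ℕ) : ℝ) ^ 2 * (M:ℝ) := by rw [hηN]; ring
  · rw [hsumM φopt, hSopt, Complex.norm_real, Real.norm_eq_abs, _root_.sq_abs, hηN]
    have habs2 : (|A| * |B|)^2 = (A * B)^2 := by rw [← abs_mul, _root_.sq_abs]
    linear_combination (-(M:ℝ) * ((Qx:ℝ)*(Qy:ℝ))^2) * habs2
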